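/- Let δ(x, y) = ‖x − y‖ be the Euclidean metric on ℝ^d. For any finite samples x₁, …, xₙ and y₁, …, yₘ in ℝ^d, the V-statistic V = (2/(mn))ΣᵢΣⱼ ‖xᵢ − yⱼ‖ − (1/n²)ΣᵢΣⱼ ‖xᵢ − xⱼ‖ − (1/m²)ΣᵢΣⱼ ‖yᵢ − yⱼ‖ is nonnegative. -/

import Mathlib

set_option maxHeartbeats 1000000

open Finset MeasureTheory Set

lemma aux_pd_inner_pow {d : ℕ} {ι : Type*} [Fintype ι] (c : ι → ℝ)
    (z : ι → EuclideanSpace ℝ (Fin d)) (N : ℕ) :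
    0 ≤ ∑ k, ∑ l, c k * c l * (inner ℝ (z k) (z l) : ℝ) ^ N := by
  have hinner : ∀ k l : ι, (inner ℝ (z k) (z l) : ℝ) = ∑ i, z k i * z l i := by
    intro k l
    rw [PiLp.inner_apply]
    simp [mul_comm]
  have key : ∀ k l : ι, c k * c l * (inner ℝ (z k) (z l) : ℝ) ^ N
      = ∑ g ∈ Fintype.piFinset (fun _ : Fin N => (univ : Finset (Fin d))),
          (c k * ∏ j, z k (g j)) * (c l * ∏ j, z l (g j)) := by
    intro k l
    have hp : ((∑ i, z k i * z l i : ℝ)) ^ N = ∏ _j : Fin N, (∑ i, z k i * z l i) := by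
      simp [Finset.prod_const]
    rw [hinner, hp, Finset.prod_univ_sum]
    rw [Finset.mul_sum]
    refine Finset.sum_congr rfl fun g _ => ?_
    rw [Finset.prod_mul_distrib]; ring
  simp_rw [key]
  have swap1 : ∀ k : ι, (∑ l, ∑ g ∈ Fintype.piFinset (fun _ : Fin N => (univ : Finset (Fin d))),
      (c k * ∏ j, z k (g j)) * (c l * ∏ j, z l (g j)))
      = ∑ g ∈ Fintype.piFinset (fun _ : Fin N => (univ : Finset (Fin d))),
        ∑ l, (c k * ∏ j, z k (g j)) * (c l * ∏ j, z l (g j)) := fun k => Finset.sum_comm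
  simp_rw [swap1]
  rw [Finset.sum_comm]
  refine Finset.sum_nonneg fun g _ => ?_
  rw [← Finset.sum_mul_sum]
  exact mul_self_nonneg _

lemma aux_pd_gauss {d : ℕ} {ι : Type*} [Fintype ι] (c : ι → ℝ)
    (z : ι → EuclideanSpace ℝ (Fin d)) {s : ℝ} (hs : 0 ≤ s) :
    0 ≤ ∑ k, ∑ l, c k * c l * Real.exp (-(s * ‖z k - z l‖ ^ 2)) := by
  set b : ι → ℝ := fun k => c k * Real.exp (-(s * ‖z k‖ ^ 2)) with hb
  have hexp : ∀ k l : ι, c k * c l * Real.exp (-(s * ‖z k - z l‖ ^ 2))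
      = b k * b l * Real.exp (2 * s * (inner ℝ (z k) (z l) : ℝ)) := by
    intro k l
    have hnorm : ‖z k - z l‖ ^ 2 = ‖z k‖ ^ 2 - 2 * (inner ℝ (z k) (z l) : ℝ) + ‖z l‖ ^ 2 :=
      norm_sub_sq_real _ _
    have harg : -(s * (‖z k‖ ^ 2 - 2 * (inner ℝ (z k) (z l) : ℝ) + ‖z l‖ ^ 2))
        = (-(s * ‖z k‖ ^ 2)) + (-(s * ‖z l‖ ^ 2)) + (2 * s * (inner ℝ (z k) (z l) : ℝ)) := by ring
    rw [hb, hnorm, harg, Real.exp_add, Real.exp_add]; ring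
  simp_rw [hexp]
  -- expand exp as a power series
  have hser : ∀ k l : ι, b k * b l * Real.exp (2 * s * (inner ℝ (z k) (z l) : ℝ))
      = ∑' N : ℕ, b k * b l * ((2 * s * (inner ℝ (z k) (z l) : ℝ)) ^ N / (N.factorial : ℝ)) := by
    intro k l
    rw [Real.exp_eq_exp_ℝ, NormedSpace.exp_eq_tsum_div]
    exact (tsum_mul_left).symm
  simp_rw [hser]
  have hsummable : ∀ k l : ι,
      Summable (fun N : ℕ => b k * b l * ((2 * s * (inner ℝ (z k) (z l) : ℝ)) ^ N / (N.factorial : ℝ))) :=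
    fun k l => (Real.summable_pow_div_factorial _).mul_left _
  -- turn the double finite sum into a single finite sum over pairs, and swap with the tsum
  rw [← Fintype.sum_prod_type (f := fun p : ι × ι =>
      ∑' N : ℕ, b p.1 * b p.2 * ((2 * s * (inner ℝ (z p.1) (z p.2) : ℝ)) ^ N / (N.factorial : ℝ)))]
  rw [← Summable.tsum_finsetSum (fun p _ => hsummable p.1 p.2)]
  refine tsum_nonneg fun N => ?_
  have : ∀ p : ι × ι, b p.1 * b p.2 * ((2 * s * (inner ℝ (z p.1) (z p.2) : ℝ)) ^ N / (N.factorial : ℝ))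
      = ((2 * s) ^ N / (N.factorial : ℝ)) * (b p.1 * b p.2 * (inner ℝ (z p.1) (z p.2) : ℝ) ^ N) := by
    intro p; rw [mul_pow]; ring
  simp_rw [this]
  rw [← Finset.mul_sum]
  have h1 : (0:ℝ) ≤ (2 * s) ^ N / (N.factorial : ℝ) := by positivity
  refine mul_nonneg h1 ?_
  rw [Fintype.sum_prod_type (f := fun p : ι × ι => b p.1 * b p.2 * (inner ℝ (z p.1) (z p.2) : ℝ) ^ N)]
  exact aux_pd_inner_pow b z N

noncomputable def auxPhi (a : ℝ) : ℝ :=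
  ∫ s in Set.Ioi (0:ℝ), (1 - Real.exp (-(s * a))) * s ^ (-(3/2) : ℝ)

lemma aux_integrable_phi {a : ℝ} (ha : 0 ≤ a) :
    IntegrableOn (fun s : ℝ => (1 - Real.exp (-(s * a))) * s ^ (-(3/2) : ℝ)) (Set.Ioi 0) := by
  have hmeas : Measurable (fun s : ℝ => (1 - Real.exp (-(s * a))) * s ^ (-(3/2) : ℝ)) := by
    fun_prop
  have h1 : IntegrableOn (fun s : ℝ => (1 - Real.exp (-(s * a))) * s ^ (-(3/2) : ℝ)) (Set.Ioc 0 1) := by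
    have hbound : IntegrableOn (fun s : ℝ => a * s ^ (-(1/2) : ℝ)) (Set.Ioc 0 1) := by
      refine Integrable.const_mul ?_ a
      have h := intervalIntegral.intervalIntegrable_rpow' (a := 0) (b := 1)
        (r := (-(1/2) : ℝ)) (by norm_num)
      rw [intervalIntegrable_iff_integrableOn_Ioc_of_le (by norm_num)] at h
      exact h
    refine Integrable.mono' hbound hmeas.aestronglyMeasurable.restrict ?_
    filter_upwards [ae_restrict_mem measurableSet_Ioc] with s hsmem
    obtain ⟨hs0, hs1⟩ := hsmem
    have h2 : 0 ≤ 1 - Real.exp (-(s * a)) := by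
      have := Real.exp_le_one_iff.mpr (by nlinarith : -(s * a) ≤ 0)
      linarith
    have h3 : 1 - Real.exp (-(s * a)) ≤ s * a := by
      have := Real.add_one_le_exp (-(s * a))
      linarith
    rw [Real.norm_eq_abs, abs_of_nonneg (mul_nonneg h2 (Real.rpow_nonneg hs0.le _))]
    calc (1 - Real.exp (-(s * a))) * s ^ (-(3/2) : ℝ)
        ≤ (s * a) * s ^ (-(3/2) : ℝ) :=
          mul_le_mul_of_nonneg_right h3 (Real.rpow_nonneg hs0.le _)
      _ = a * (s ^ (1:ℝ) * s ^ (-(3/2) : ℝ)) := by rw [Real.rpow_one]; ring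
      _ = a * s ^ (-(1/2) : ℝ) := by
          rw [← Real.rpow_add hs0]; norm_num
  have h2 : IntegrableOn (fun s : ℝ => (1 - Real.exp (-(s * a))) * s ^ (-(3/2) : ℝ)) (Set.Ioi 1) := by
    have hbound : IntegrableOn (fun s : ℝ => s ^ (-(3/2) : ℝ)) (Set.Ioi 1) :=
      integrableOn_Ioi_rpow_of_lt (by norm_num) one_pos
    refine Integrable.mono' hbound hmeas.aestronglyMeasurable.restrict ?_
    filter_upwards [ae_restrict_mem measurableSet_Ioi] with s hs
    have hs0 : (0:ℝ) < s := lt_trans one_pos hs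
    have h2 : 0 ≤ 1 - Real.exp (-(s * a)) := by
      have := Real.exp_le_one_iff.mpr (by nlinarith : -(s * a) ≤ 0)
      linarith
    have h3 : 1 - Real.exp (-(s * a)) ≤ 1 := by
      have := Real.exp_pos (-(s * a)); linarith
    rw [Real.norm_eq_abs, abs_of_nonneg (mul_nonneg h2 (Real.rpow_nonneg hs0.le _))]
    calc (1 - Real.exp (-(s * a))) * s ^ (-(3/2) : ℝ)
        ≤ 1 * s ^ (-(3/2) : ℝ) := mul_le_mul_of_nonneg_right h3 (Real.rpow_nonneg hs0.le _)
      _ = s ^ (-(3/2) : ℝ) := one_mul _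
  have : Set.Ioi (0:ℝ) = Set.Ioc 0 1 ∪ Set.Ioi 1 := (Set.Ioc_union_Ioi_eq_Ioi (zero_le_one (α := ℝ))).symm
  rw [this]
  exact h1.union h2

lemma aux_phi_eq {a : ℝ} (ha : 0 ≤ a) : auxPhi a = Real.sqrt a * auxPhi 1 := by
  rcases eq_or_lt_of_le ha with h0 | hpos
  · simp only [← h0, auxPhi, mul_zero, neg_zero, Real.exp_zero, sub_self, zero_mul,
      MeasureTheory.integral_zero, Real.sqrt_zero]
  · unfold auxPhi
    have key := MeasureTheory.integral_comp_mul_left_Ioi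
      (g := fun s : ℝ => (1 - Real.exp (-s)) * s ^ (-(3/2) : ℝ)) 0 hpos
    rw [mul_zero] at key
    simp only [smul_eq_mul] at key
    have lhs_eq : ∀ x ∈ Set.Ioi (0:ℝ),
        (1 - Real.exp (-(a * x))) * (a * x) ^ (-(3/2) : ℝ)
        = a ^ (-(3/2) : ℝ) * ((1 - Real.exp (-(x * a))) * x ^ (-(3/2) : ℝ)) := by
      intro x hx
      rw [Real.mul_rpow hpos.le (le_of_lt hx), mul_comm x a]
      ring
    rw [MeasureTheory.setIntegral_congr_fun measurableSet_Ioi lhs_eq,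
      MeasureTheory.integral_const_mul] at key
    have ha32 : a ^ (-(3/2) : ℝ) ≠ 0 := by positivity
    have heq : (∫ x in Set.Ioi (0:ℝ), (1 - Real.exp (-(x * a))) * x ^ (-(3/2) : ℝ))
        = (a ^ (-(3/2) : ℝ))⁻¹ * (a⁻¹ * ∫ s in Set.Ioi (0:ℝ),
            (1 - Real.exp (-s)) * s ^ (-(3/2) : ℝ)) := by
      rw [← key, inv_mul_cancel_left₀ ha32]
    have hfac : (a ^ (-(3/2) : ℝ))⁻¹ * a⁻¹ = Real.sqrt a := by
      rw [Real.rpow_neg hpos.le, inv_inv, ← Real.rpow_neg_one a, ← Real.rpow_add hpos,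
        Real.sqrt_eq_rpow]
      norm_num
    simp only [mul_one]
    rw [heq, ← mul_assoc, hfac]

lemma aux_phi_one_pos : 0 < auxPhi 1 := by
  unfold auxPhi
  have hsupp : Set.Ioi (0:ℝ) ⊆ Function.support
      (fun s : ℝ => (1 - Real.exp (-(s * 1))) * s ^ (-(3/2) : ℝ)) := by
    intro s hs
    have hs0 : (0:ℝ) < s := hs
    have h1 : Real.exp (-(s * 1)) < 1 := by
      rw [Real.exp_lt_one_iff]; linarith
    have h2 : (0:ℝ) < s ^ (-(3/2) : ℝ) := Real.rpow_pos_of_pos hs0 _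
    exact ne_of_gt (mul_pos (by linarith) h2)
  rw [MeasureTheory.setIntegral_pos_iff_support_of_nonneg_ae]
  · rw [Set.inter_eq_self_of_subset_right hsupp, Real.volume_Ioi]
    exact ENNReal.zero_lt_top
  · filter_upwards [MeasureTheory.ae_restrict_mem measurableSet_Ioi] with s hs
    have hs0 : (0:ℝ) < s := hs
    have h1 : Real.exp (-(s * 1)) ≤ 1 := by
      rw [Real.exp_le_one_iff]; linarith
    have h2 : (0:ℝ) ≤ s ^ (-(3/2) : ℝ) := Real.rpow_nonneg hs0.le _
    exact mul_nonneg (by linarith) h2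
  · exact aux_integrable_phi zero_le_one

lemma aux_cnd {d : ℕ} {ι : Type*} [Fintype ι] (c : ι → ℝ)
    (z : ι → EuclideanSpace ℝ (Fin d)) (hc : ∑ k, c k = 0) :
    ∑ k, ∑ l, c k * c l * ‖z k - z l‖ ≤ 0 := by
  have hφ := aux_phi_one_pos
  have hrep : ∀ k l : ι, c k * c l * ‖z k - z l‖
      = (auxPhi 1)⁻¹ * (c k * c l * auxPhi (‖z k - z l‖ ^ 2)) := by
    intro k l
    have h1 : auxPhi (‖z k - z l‖ ^ 2) = ‖z k - z l‖ * auxPhi 1 := by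
      rw [aux_phi_eq (sq_nonneg _), Real.sqrt_sq (norm_nonneg _)]
    rw [h1]
    field_simp
  simp_rw [hrep, ← Finset.mul_sum]
  have hsum : ∑ k, ∑ l, c k * c l * auxPhi (‖z k - z l‖ ^ 2) ≤ 0 := by
    rw [← Fintype.sum_prod_type (f := fun p : ι × ι => c p.1 * c p.2 * auxPhi (‖z p.1 - z p.2‖ ^ 2))]
    unfold auxPhi
    have hint : ∀ p : ι × ι, c p.1 * c p.2 *
        ∫ s in Set.Ioi (0:ℝ), (1 - Real.exp (-(s * ‖z p.1 - z p.2‖ ^ 2))) * s ^ (-(3/2) : ℝ)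
        = ∫ s in Set.Ioi (0:ℝ),
            c p.1 * c p.2 * ((1 - Real.exp (-(s * ‖z p.1 - z p.2‖ ^ 2))) * s ^ (-(3/2) : ℝ)) :=
      fun p => (MeasureTheory.integral_const_mul _ _).symm
    simp_rw [hint]
    rw [← MeasureTheory.integral_finset_sum _
      (fun p _ => ((aux_integrable_phi (sq_nonneg ‖z p.1 - z p.2‖)).const_mul _))]
    refine MeasureTheory.setIntegral_nonpos measurableSet_Ioi (fun s hs => ?_)
    have hs0 : (0:ℝ) ≤ s := le_of_lt hs
    have hspow : (0:ℝ) ≤ s ^ (-(3/2) : ℝ) := Real.rpow_nonneg hs0 _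
    have e1 : ∑ p : ι × ι,
        c p.1 * c p.2 * ((1 - Real.exp (-(s * ‖z p.1 - z p.2‖ ^ 2))) * s ^ (-(3/2) : ℝ))
        = (∑ p : ι × ι, (c p.1 * c p.2
            - c p.1 * c p.2 * Real.exp (-(s * ‖z p.1 - z p.2‖ ^ 2)))) * s ^ (-(3/2) : ℝ) := by
      rw [Finset.sum_mul]
      exact Finset.sum_congr rfl fun p _ => by ring
    rw [e1, Finset.sum_sub_distrib]
    have e3 : ∑ p : ι × ι, c p.1 * c p.2 = 0 := by
      rw [Fintype.sum_prod_type, ← Finset.sum_mul_sum, hc, mul_zero]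
    have e4 : 0 ≤ ∑ p : ι × ι, c p.1 * c p.2 * Real.exp (-(s * ‖z p.1 - z p.2‖ ^ 2)) := by
      rw [Fintype.sum_prod_type]
      exact aux_pd_gauss c z hs0
    rw [e3]
    nlinarith
  exact mul_nonpos_of_nonneg_of_nonpos (inv_nonneg.mpr hφ.le) hsum

theorem energy_vstat_nonneg
    {d : ℕ} (n m : ℕ) (hn : 0 < n) (hm : 0 < m)
    (x : Fin n → EuclideanSpace ℝ (Fin d)) (y : Fin m → EuclideanSpace ℝ (Fin d)) :
    0 ≤ (2 / ((m : ℝ) * n)) * ∑ i : Fin n, ∑ j : Fin m, ‖x i - y j‖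
      - (1 / (n : ℝ) ^ 2) * ∑ i : Fin n, ∑ j : Fin n, ‖x i - x j‖
      - (1 / (m : ℝ) ^ 2) * ∑ i : Fin m, ∑ j : Fin m, ‖y i - y j‖ := by
  have hn' : (0:ℝ) < n := Nat.cast_pos.mpr hn
  have hm' : (0:ℝ) < m := Nat.cast_pos.mpr hm
  set A : ℝ := ∑ i : Fin n, ∑ j : Fin n, ‖x i - x j‖ with hA
  set B : ℝ := ∑ i : Fin m, ∑ j : Fin m, ‖y i - y j‖ with hB
  set C : ℝ := ∑ i : Fin n, ∑ j : Fin m, ‖x i - y j‖ with hC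
  set c : Fin n ⊕ Fin m → ℝ := Sum.elim (fun _ => (n:ℝ)⁻¹) (fun _ => -(m:ℝ)⁻¹) with hc
  set z : Fin n ⊕ Fin m → EuclideanSpace ℝ (Fin d) := Sum.elim x y with hz
  have hcsum : ∑ k, c k = 0 := by
    rw [Fintype.sum_sum_type]
    simp only [hc, Sum.elim_inl, Sum.elim_inr, Finset.sum_const, Finset.card_univ,
      Fintype.card_fin, nsmul_eq_mul]
    rw [mul_inv_cancel₀ hn'.ne']
    rw [mul_neg, mul_inv_cancel₀ hm'.ne']
    ring
  have h := aux_cnd c z hcsum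
  have hcross : ∑ i : Fin m, ∑ j : Fin n, ‖y i - x j‖ = C := by
    rw [Finset.sum_comm, hC]
    exact Finset.sum_congr rfl fun i _ => Finset.sum_congr rfl fun j _ => norm_sub_rev _ _
  have hexp : (∑ k, ∑ l, c k * c l * ‖z k - z l‖)
      = (n:ℝ)⁻¹ * (n:ℝ)⁻¹ * A + (m:ℝ)⁻¹ * (m:ℝ)⁻¹ * B - 2 * ((n:ℝ)⁻¹ * (m:ℝ)⁻¹) * C := by
    simp only [Fintype.sum_sum_type, hc, hz, Sum.elim_inl, Sum.elim_inr]
    rw [Finset.sum_add_distrib, Finset.sum_add_distrib]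
    simp only [← Finset.mul_sum, neg_mul, mul_neg, Finset.sum_neg_distrib, hcross]
    rw [hA, hB, hC]
    ring
  rw [hexp] at h
  have hgoal : (2 / ((m:ℝ) * n)) * C - (1 / (n:ℝ)^2) * A - (1 / (m:ℝ)^2) * B
      = -((n:ℝ)⁻¹ * (n:ℝ)⁻¹ * A + (m:ℝ)⁻¹ * (m:ℝ)⁻¹ * B - 2 * ((n:ℝ)⁻¹ * (m:ℝ)⁻¹) * C) := by
    field_simp
    ring
  rw [hgoal]
  linarith
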